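/- Let h be a standard normal random variable, c > 0, γ > 0 with p := c/(4γ) < 1/2, and ν ≥ 0. Define t = max{h²/(4γ) − ν, 0}. Then E[e^{c·t}] = C·erfc(a/√2) + (1 − erfc(√(2νγ))) where C = e^{−cν}/√(1−2p) and a = 2√(νγ)·√(1−2p). -/

import Mathlib

noncomputable def erf (t : ℝ) : ℝ := (2 / Real.sqrt Real.pi) * ∫ s in (0:ℝ)..t, Real.exp (-s ^ 2)

noncomputable def erfc (t : ℝ) : ℝ := 1 - erf t

open MeasureTheory Real intervalIntegral

lemma symm_gauss (t : ℝ) :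
    ∫ s in (-t)..t, Real.exp (-s ^ 2) = Real.sqrt Real.pi * erf t := by
  have hi : ∀ a b : ℝ, IntervalIntegrable (fun s => Real.exp (-s ^ 2)) volume a b :=
    fun a b => (Real.continuous_exp.comp (by continuity)).intervalIntegrable a b
  have h1 : ∫ s in (-t)..(0:ℝ), Real.exp (-s ^ 2) = ∫ s in (0:ℝ)..t, Real.exp (-s ^ 2) := by
    rw [show (∫ s in (0:ℝ)..t, Real.exp (-s ^ 2)) = ∫ s in (0:ℝ)..t, Real.exp (-(-s) ^ 2) by
      simp [neg_sq]]
    rw [intervalIntegral.integral_comp_neg (fun s => Real.exp (-s ^ 2))]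
    simp
  rw [← intervalIntegral.integral_add_adjacent_intervals (hi (-t) 0) (hi 0 t), h1, erf]
  have hπ : Real.sqrt Real.pi ≠ 0 := by positivity
  field_simp
  ring

lemma scaled_gauss (m b : ℝ) (hm : 0 < m) :
    ∫ x in (-b)..b, Real.exp (-(m ^ 2 * x ^ 2)) = Real.sqrt Real.pi / m * erf (m * b) := by
  have : ∀ x : ℝ, Real.exp (-(m ^ 2 * x ^ 2)) = (fun s => Real.exp (-s ^ 2)) (m * x) := by
    intro x; simp [mul_pow]
  simp_rw [this]
  rw [intervalIntegral.integral_comp_mul_left (fun s => Real.exp (-s ^ 2)) hm.ne']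
  rw [mul_neg, symm_gauss (m * b)]
  simp [smul_eq_mul]
  field_simp

theorem stmt6 (c γ ν : ℝ) (hc : 0 < c) (hγ : 0 < γ) (hp : c / (4 * γ) < 1 / 2) (hν : 0 ≤ ν) :
    ∫ x : ℝ, Real.exp (c * max (x ^ 2 / (4 * γ) - ν) 0) *
        (Real.exp (-x ^ 2 / 2) / Real.sqrt (2 * Real.pi))
      = (Real.exp (-(c * ν)) / Real.sqrt (1 - 2 * (c / (4 * γ)))) *
          erfc (2 * Real.sqrt (ν * γ) * Real.sqrt (1 - 2 * (c / (4 * γ))) / Real.sqrt 2)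
        + (1 - erfc (Real.sqrt (2 * ν * γ))) := by
  set k : ℝ := 1 - 2 * (c / (4 * γ)) with hkdef
  have hk : 0 < k := by simp only [hkdef]; linarith
  set b : ℝ := 2 * Real.sqrt (ν * γ) with hbdef
  have hνγ : 0 ≤ ν * γ := mul_nonneg hν hγ.le
  have hb : 0 ≤ b := by positivity
  have hb2 : b ^ 2 = 4 * (ν * γ) := by
    rw [hbdef, mul_pow, Real.sq_sqrt hνγ]; ring
  set f : ℝ → ℝ := fun x => Real.exp (c * max (x ^ 2 / (4 * γ) - ν) 0) *
      (Real.exp (-x ^ 2 / 2) / Real.sqrt (2 * Real.pi)) with hfdef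
  set g : ℝ → ℝ := fun x => Real.exp (-(c * ν)) *
      (Real.exp (-(k / 2 * x ^ 2)) / Real.sqrt (2 * Real.pi)) with hgdef
  set φ : ℝ → ℝ := fun x => Real.exp (-(1 / 2 * x ^ 2)) / Real.sqrt (2 * Real.pi) with hφdef
  have hexp : ∀ A B : ℝ, Real.exp A * (Real.exp B / Real.sqrt (2 * Real.pi))
      = Real.exp (A + B) / Real.sqrt (2 * Real.pi) := by
    intro A B; rw [Real.exp_add]; ring
  -- integrability
  have hgik : Integrable (fun x : ℝ => Real.exp (-(k / 2 * x ^ 2))) := by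
    simpa [neg_mul] using integrable_exp_neg_mul_sq (by positivity : (0:ℝ) < k / 2)
  have hgi : Integrable g := by
    simpa [hgdef, mul_div_assoc] using (hgik.const_mul (Real.exp (-(c * ν)))).div_const
        (Real.sqrt (2 * Real.pi))
  have hφi : Integrable φ := by
    simpa [hφdef, neg_mul] using
      (integrable_exp_neg_mul_sq (by norm_num : (0:ℝ) < 1/2)).div_const (Real.sqrt (2 * Real.pi))
  have hfc : Continuous f := by fun_prop
  have hfi : Integrable f := by
    refine Integrable.mono' (hgik.div_const (Real.sqrt (2 * Real.pi)))
      hfc.aestronglyMeasurable (Filter.Eventually.of_forall fun x => ?_)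
    have h1 : max (x ^ 2 / (4 * γ) - ν) 0 ≤ x ^ 2 / (4 * γ) :=
      max_le (by linarith [sub_le_self (x ^ 2 / (4 * γ)) hν]) (by positivity)
    have h2 : c * max (x ^ 2 / (4 * γ) - ν) 0 + -x ^ 2 / 2 ≤ -(k / 2 * x ^ 2) := by
      have := mul_le_mul_of_nonneg_left h1 hc.le
      have hx : c * (x ^ 2 / (4 * γ)) + -x ^ 2 / 2 = -(k / 2 * x ^ 2) := by
        rw [hkdef]; field_simp; ring
      linarith
    have hfx : f x = Real.exp (c * max (x ^ 2 / (4 * γ) - ν) 0 + -x ^ 2 / 2)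
        / Real.sqrt (2 * Real.pi) := by rw [hfdef]; exact hexp _ _
    rw [Real.norm_eq_abs, abs_of_nonneg (by rw [hfx]; positivity), hfx]
    exact div_le_div_of_nonneg_right (Real.exp_le_exp.mpr h2) (by positivity)
  -- splitting
  have hsplit : (∫ x in Set.Icc (-b) b, f x) + (∫ x in (Set.Icc (-b) b)ᶜ, f x) = ∫ x, f x :=
    integral_add_compl measurableSet_Icc hfi
  have hS : ∫ x in Set.Icc (-b) b, f x = ∫ x in Set.Icc (-b) b, φ x := by
    refine setIntegral_congr_fun measurableSet_Icc fun x hx => ?_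
    obtain ⟨h1, h2⟩ := hx
    have hx2 : x ^ 2 ≤ 4 * (ν * γ) := by rw [← hb2]; exact sq_le_sq' h1 h2
    have hmax : max (x ^ 2 / (4 * γ) - ν) 0 = 0 :=
      max_eq_right (by rw [sub_nonpos, div_le_iff₀ (by positivity)]; linarith)
    simp only [hfdef, hφdef, hmax, mul_zero, Real.exp_zero, one_mul]
    ring_nf
  have hSc : ∫ x in (Set.Icc (-b) b)ᶜ, f x = ∫ x in (Set.Icc (-b) b)ᶜ, g x := by
    refine setIntegral_congr_fun measurableSet_Icc.compl fun x hx => ?_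
    have hx2 : 4 * (ν * γ) ≤ x ^ 2 := by
      rw [← hb2]
      rcases lt_or_ge x (-b) with h | h
      · nlinarith
      · have h2 : b < x := by
          by_contra h2; push_neg at h2; exact hx ⟨h, h2⟩
        nlinarith
    have hmax : max (x ^ 2 / (4 * γ) - ν) 0 = x ^ 2 / (4 * γ) - ν :=
      max_eq_left (by rw [sub_nonneg, le_div_iff₀ (by positivity)]; linarith)
    simp only [hfdef, hgdef, hmax]
    rw [hexp, hexp]
    congr 1
    rw [Real.exp_eq_exp, hkdef]
    field_simp
    ring
  -- sqrt facts
  set m : ℝ := Real.sqrt (k / 2) with hmdef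
  have hm : 0 < m := Real.sqrt_pos.mpr (by positivity)
  have hm2 : m ^ 2 = k / 2 := Real.sq_sqrt (by positivity)
  have hkpos : (0:ℝ) < Real.sqrt k := Real.sqrt_pos.mpr hk
  have hπ : (0:ℝ) < Real.sqrt Real.pi := Real.sqrt_pos.mpr Real.pi_pos
  have h2π : (0:ℝ) < Real.sqrt (2 * Real.pi) := Real.sqrt_pos.mpr (by positivity)
  have harg1 : Real.sqrt (1/2) * b = Real.sqrt (2 * ν * γ) := by
    have hsq : (Real.sqrt (1/2) * b) ^ 2 = 2 * ν * γ := by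
      rw [mul_pow, Real.sq_sqrt (by norm_num : (0:ℝ) ≤ 1/2), hb2]; ring
    calc Real.sqrt (1/2) * b = Real.sqrt ((Real.sqrt (1/2) * b) ^ 2) :=
          (Real.sqrt_sq (by positivity)).symm
    _ = Real.sqrt (2 * ν * γ) := by rw [hsq]
  have harg2 : m * b = b * Real.sqrt k / Real.sqrt 2 := by
    rw [hmdef, Real.sqrt_div hk.le]; ring
  -- the four integral values
  have eφ : ∫ x in Set.Icc (-b) b, φ x = erf (Real.sqrt (2 * ν * γ)) := by
    have h := scaled_gauss (Real.sqrt (1/2)) b (by positivity)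
    rw [Real.sq_sqrt (by norm_num : (0:ℝ) ≤ 1/2), harg1] at h
    have hs : Real.sqrt Real.pi / Real.sqrt (1/2) = Real.sqrt (2 * Real.pi) := by
      rw [← Real.sqrt_div Real.pi_nonneg]
      norm_num [mul_comm]
    simp only [hφdef]
    rw [integral_Icc_eq_integral_Ioc, ← intervalIntegral.integral_of_le (neg_le_self hb),
      intervalIntegral.integral_div, h, hs]
    field_simp
  have eg_int : ∫ x in (-b)..b, Real.exp (-(k/2 * x ^ 2))
      = Real.sqrt Real.pi / m * erf (b * Real.sqrt k / Real.sqrt 2) := by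
    have h := scaled_gauss m b hm
    rw [hm2, harg2] at h
    exact h
  have hms : Real.sqrt Real.pi / m / Real.sqrt (2 * Real.pi) = 1 / Real.sqrt k := by
    rw [hmdef, Real.sqrt_div hk.le, Real.sqrt_mul (by norm_num : (0:ℝ) ≤ 2)]
    have h2 : (0:ℝ) < Real.sqrt 2 := Real.sqrt_pos.mpr (by norm_num)
    field_simp
  have egS : ∫ x in Set.Icc (-b) b, g x
      = Real.exp (-(c * ν)) * ((1 / Real.sqrt k) * erf (b * Real.sqrt k / Real.sqrt 2)) := by
    simp only [hgdef]
    rw [integral_Icc_eq_integral_Ioc, ← intervalIntegral.integral_of_le (neg_le_self hb),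
      intervalIntegral.integral_const_mul, intervalIntegral.integral_div, eg_int]
    rw [show Real.sqrt Real.pi / m * erf (b * Real.sqrt k / Real.sqrt 2) / Real.sqrt (2 * Real.pi)
      = (Real.sqrt Real.pi / m / Real.sqrt (2 * Real.pi)) * erf (b * Real.sqrt k / Real.sqrt 2)
      by ring, hms]
  have egR : ∫ x, g x = Real.exp (-(c * ν)) * (1 / Real.sqrt k) := by
    simp only [hgdef]
    rw [MeasureTheory.integral_const_mul, MeasureTheory.integral_div]
    have h := integral_gaussian (k/2)
    simp only [neg_mul] at h
    rw [h]
    have : Real.sqrt (Real.pi / (k/2)) = Real.sqrt Real.pi / m := by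
      rw [hmdef, Real.sqrt_div Real.pi_nonneg]
    rw [this, hms]
  have hcompl_g : ∫ x in (Set.Icc (-b) b)ᶜ, g x = (∫ x, g x) - ∫ x in Set.Icc (-b) b, g x := by
    have h := integral_add_compl (measurableSet_Icc : MeasurableSet (Set.Icc (-b) b)) hgi
    linarith
  calc ∫ x, f x = (∫ x in Set.Icc (-b) b, f x) + ∫ x in (Set.Icc (-b) b)ᶜ, f x := hsplit.symm
  _ = erf (Real.sqrt (2 * ν * γ)) + (Real.exp (-(c * ν)) * (1 / Real.sqrt k)
        - Real.exp (-(c * ν)) * ((1 / Real.sqrt k) * erf (b * Real.sqrt k / Real.sqrt 2))) := by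
      rw [hS, hSc, eφ, hcompl_g, egS, egR]
  _ = (Real.exp (-(c * ν)) / Real.sqrt k) * erfc (b * Real.sqrt k / Real.sqrt 2)
        + (1 - erfc (Real.sqrt (2 * ν * γ))) := by
      simp only [erfc]; ring
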